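/- Let ρ : sl(2) → Diff(ℂ((z))) be given by ρ(L_i) = h^i ∘ (L + i c) for i = −1, 0, 1, where L = ρ(L_0) = −(h/h′)∂ + b, h,b ∈ ℂ((z)), h′ ≠ 0, c ∈ ℂ. Then in the universal enveloping algebra picture, ρ(L_1^α L_0^β L_{−1}^γ) = h^{α−γ} · P(L + c − α + γ + 1, α) · (L + γ)^β · P(L − c, γ) for all nonnegative integers α, β, γ, where P is the Pochhammer symbol P(f,n) = f(f+1)···(f+n−1). -/

import Mathlib

set_option synthInstance.maxHeartbeats 1000000
set_option maxHeartbeats 1000000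

noncomputable section

/-- The derivative `∂ = d/dz` on `ℂ((z))`, as a `ℂ`-linear endomorphism. -/
def Dz : Module.End ℂ (LaurentSeries ℂ) := LaurentSeries.derivative ℂ

/-- Multiplication by a Laurent series `g`, as a `ℂ`-linear endomorphism of `ℂ((z))`. -/
def mz (g : LaurentSeries ℂ) : Module.End ℂ (LaurentSeries ℂ) where
  toFun f := g * f
  map_add' := mul_add g
  map_smul' c f := by
    show g * (c • f) = c • (g * f)
    rw [← HahnSeries.single_zero_mul_eq_smul, ← HahnSeries.single_zero_mul_eq_smul, mul_left_comm]

/-- `P` is a differential operator on `ℂ((z))` of order `≤ k`: `P = Σ_{j=0}^{k} ξ_j ∂^j`. -/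
def DiffOrderLE (P : Module.End ℂ (LaurentSeries ℂ)) (k : ℕ) : Prop :=
  ∃ ξ : ℕ → LaurentSeries ℂ, P = ∑ j ∈ Finset.range (k + 1), mz (ξ j) * Dz ^ j

/-- `P` is a differential operator on `ℂ((z))` of order `< k` (for `k = 0` this means `P = 0`). -/
def DiffOrderLT (P : Module.End ℂ (LaurentSeries ℂ)) (k : ℕ) : Prop :=
  ∃ ξ : ℕ → LaurentSeries ℂ, P = ∑ j ∈ Finset.range k, mz (ξ j) * Dz ^ j

/-- `P` is a differential operator on `ℂ((z))` of order exactly `k`. -/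
def HasOrder (P : Module.End ℂ (LaurentSeries ℂ)) (k : ℕ) : Prop :=
  DiffOrderLE P k ∧ ¬ DiffOrderLT P k

/-- The Pochhammer product `P(A, n) = A (A+1) ⋯ (A+n−1)` in the ring of endomorphisms. -/
def pochEnd (A : Module.End ℂ (LaurentSeries ℂ)) (n : ℕ) : Module.End ℂ (LaurentSeries ℂ) :=
  ((List.range n).map fun k => A + (k : ℂ) • 1).prod

lemma Dz_coeff (f : LaurentSeries ℂ) (n : ℤ) : (Dz f).coeff n = (n + 1) • f.coeff (n + 1) := by
  show (LaurentSeries.derivative ℂ f).coeff n = _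
  rw [LaurentSeries.derivative_apply, LaurentSeries.hasseDeriv_coeff]
  norm_num [Ring.choose_one_right]

lemma mul_coeff_both {x y : LaurentSeries ℂ} {a : ℤ} {s t : Set ℤ} (hs : s.IsPWO) (ht : t.IsPWO)
    (hxs : x.support ⊆ s) (hyt : y.support ⊆ t) :
    (x * y).coeff a = ∑ ij ∈ Finset.antidiagonal hs ht a, x.coeff ij.1 * y.coeff ij.2 := by
  rw [HahnSeries.coeff_mul_left' hs hxs]
  refine Finset.sum_subset (Finset.antidiagonal_mono_right hyt) ?_
  intro ij h1 h2
  rw [Finset.mem_antidiagonal] at h1 h2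
  have : y.coeff ij.2 = 0 := by
    by_contra hc
    exact h2 ⟨h1.1, hc, h1.2.2⟩
  rw [this, mul_zero]

lemma Dz_mul (f g : LaurentSeries ℂ) : Dz (f * g) = Dz f * g + f * Dz g := by
  ext n
  set N : ℤ := min f.order g.order - 1 with hN
  have hNf : N < f.order := by have := min_le_left f.order g.order; omega
  have hNg : N < g.order := by have := min_le_right f.order g.order; omega
  have hU : (Set.Ici N).IsPWO := Set.IsWF.isPWO bddBelow_Ici.wellFoundedOn_lt
  have hfU : f.support ⊆ Set.Ici N := fun m hm => by
    by_contra hc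
    exact hm (HahnSeries.coeff_eq_zero_of_lt_order (by simp [Set.mem_Ici] at hc; omega))
  have hgU : g.support ⊆ Set.Ici N := fun m hm => by
    by_contra hc
    exact hm (HahnSeries.coeff_eq_zero_of_lt_order (by simp [Set.mem_Ici] at hc; omega))
  have hDfU : (Dz f).support ⊆ Set.Ici N := fun m hm => by
    by_contra hc
    simp only [Set.mem_Ici, not_le] at hc
    apply hm
    rw [Dz_coeff, HahnSeries.coeff_eq_zero_of_lt_order (by omega : m + 1 < f.order), smul_zero]
  have hDgU : (Dz g).support ⊆ Set.Ici N := fun m hm => by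
    by_contra hc
    simp only [Set.mem_Ici, not_le] at hc
    apply hm
    rw [Dz_coeff, HahnSeries.coeff_eq_zero_of_lt_order (by omega : m + 1 < g.order), smul_zero]
  rw [Dz_coeff, HahnSeries.coeff_add, mul_coeff_both hU hU hfU hgU,
    mul_coeff_both hU hU hDfU hgU, mul_coeff_both hU hU hfU hDgU]
  simp only [Dz_coeff]
  have claim1 : ∑ ij ∈ Finset.antidiagonal hU hU n,
      ((ij.1 + 1) • f.coeff (ij.1 + 1)) * g.coeff ij.2 =
      ∑ ij ∈ Finset.antidiagonal hU hU (n + 1), (ij.1 • f.coeff ij.1) * g.coeff ij.2 := by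
    refine Finset.sum_bij_ne_zero (fun ij _ _ => (ij.1 + 1, ij.2)) ?_ ?_ ?_ ?_
    · intro ij h1 h2
      rw [Finset.mem_antidiagonal] at h1 ⊢
      obtain ⟨ha, hb, hab⟩ := h1
      exact ⟨by simp only [Set.mem_Ici] at ha ⊢; omega, hb, by omega⟩
    · intro a ha1 ha2 b hb1 hb2 hab
      simp only [Prod.mk.injEq] at hab
      ext <;> omega
    · intro ij hmem hne
      have hf1 : f.coeff ij.1 ≠ 0 := by
        intro h0; apply hne; rw [h0, smul_zero, zero_mul]
      have hord : f.order ≤ ij.1 := HahnSeries.order_le_of_coeff_ne_zero hf1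
      rw [Finset.mem_antidiagonal] at hmem
      refine ⟨(ij.1 - 1, ij.2), ?_, ?_, ?_⟩
      · rw [Finset.mem_antidiagonal]
        exact ⟨by simp only [Set.mem_Ici]; omega, hmem.2.1, by omega⟩
      · simpa [sub_add_cancel] using hne
      · ext <;> simp
    · intro ij h1 h2
      rfl
  have claim2 : ∑ ij ∈ Finset.antidiagonal hU hU n,
      f.coeff ij.1 * ((ij.2 + 1) • g.coeff (ij.2 + 1)) =
      ∑ ij ∈ Finset.antidiagonal hU hU (n + 1), f.coeff ij.1 * (ij.2 • g.coeff ij.2) := by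
    refine Finset.sum_bij_ne_zero (fun ij _ _ => (ij.1, ij.2 + 1)) ?_ ?_ ?_ ?_
    · intro ij h1 h2
      rw [Finset.mem_antidiagonal] at h1 ⊢
      obtain ⟨ha, hb, hab⟩ := h1
      exact ⟨ha, by simp only [Set.mem_Ici] at hb ⊢; omega, by omega⟩
    · intro a ha1 ha2 b hb1 hb2 hab
      simp only [Prod.mk.injEq] at hab
      ext <;> omega
    · intro ij hmem hne
      have hg1 : g.coeff ij.2 ≠ 0 := by
        intro h0; apply hne; rw [h0, smul_zero, mul_zero]
      have hord : g.order ≤ ij.2 := HahnSeries.order_le_of_coeff_ne_zero hg1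
      rw [Finset.mem_antidiagonal] at hmem
      refine ⟨(ij.1, ij.2 - 1), ?_, ?_, ?_⟩
      · rw [Finset.mem_antidiagonal]
        exact ⟨hmem.1, by simp only [Set.mem_Ici]; omega, by omega⟩
      · simpa [sub_add_cancel] using hne
      · ext <;> simp
    · intro ij h1 h2
      rfl
  rw [claim1, claim2, ← Finset.sum_add_distrib, Finset.smul_sum]
  refine Finset.sum_congr rfl ?_
  intro ij hmem
  rw [Finset.mem_antidiagonal] at hmem
  have hsum : ij.1 + ij.2 = n + 1 := hmem.2.2
  rw [smul_mul_assoc, mul_smul_comm, ← add_smul, hsum]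

lemma mz_apply (g f : LaurentSeries ℂ) : mz g f = g * f := rfl
lemma mz_mul (a b : LaurentSeries ℂ) : mz (a * b) = mz a * mz b :=
  LinearMap.ext fun f => mul_assoc a b f
lemma mz_one : mz 1 = 1 := LinearMap.ext fun f => one_mul f

lemma central (s : ℂ) (X : Module.End ℂ (LaurentSeries ℂ)) : X * (s • 1) = (s • 1) * X := by
  rw [mul_smul_comm, smul_mul_assoc, mul_one, one_mul]

lemma smul_merge (X : Module.End ℂ (LaurentSeries ℂ)) (s t : ℂ) :
    X + s • 1 + t • 1 = X + (s + t) • 1 := by rw [add_assoc, ← add_smul]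

lemma pochEnd_zero (A : Module.End ℂ (LaurentSeries ℂ)) : pochEnd A 0 = 1 := rfl

lemma pochEnd_succ (A : Module.End ℂ (LaurentSeries ℂ)) (n : ℕ) :
    pochEnd A (n + 1) = pochEnd A n * (A + (n : ℂ) • 1) := by
  simp [pochEnd, List.range_succ]

lemma pochEnd_succ_head (A : Module.End ℂ (LaurentSeries ℂ)) (n : ℕ) :
    pochEnd A (n + 1) = A * pochEnd (A + (1 : ℂ) • 1) n := by
  induction n with
  | zero => simp [pochEnd_succ, pochEnd_zero]
  | succ n ih =>
    rw [pochEnd_succ, ih, pochEnd_succ, mul_assoc]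
    congr 2
    push_cast
    rw [add_assoc, ← add_smul, add_comm (1 : ℂ)]

lemma comm_factor (A : Module.End ℂ (LaurentSeries ℂ)) (s t : ℂ) :
    (A + s • 1) * (A + t • 1) = (A + t • 1) * (A + s • 1) := by
  simp only [mul_add, add_mul]
  rw [central t A, central s A, central t (s • 1)]
  abel

lemma poch_comm (A : Module.End ℂ (LaurentSeries ℂ)) (n : ℕ) (s : ℂ) :
    pochEnd A n * (A + s • 1) = (A + s • 1) * pochEnd A n := by
  induction n with
  | zero => rw [pochEnd_zero, one_mul, mul_one]
  | succ n ih =>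
    rw [pochEnd_succ, mul_assoc, comm_factor, ← mul_assoc, ih, mul_assoc]

section Main
variable {h b : LaurentSeries ℂ} {c : ℂ}
  {L : Module.End ℂ (LaurentSeries ℂ)}

lemma shift_comm {M : Module.End ℂ (LaurentSeries ℂ)} {δ : ℂ}
    (hM : L * M = M * (L + δ • 1)) (s : ℂ) :
    (L + s • 1) * M = M * (L + (s + δ) • 1) := by
  rw [add_mul, hM, smul_mul_assoc, one_mul, mul_add, mul_add, add_assoc,
    mul_smul_comm δ M 1, mul_smul_comm (s + δ) M 1, mul_one, ← add_smul, add_comm δ s]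

lemma pow_shift {M : Module.End ℂ (LaurentSeries ℂ)} {δ : ℂ}
    (hM : L * M = M * (L + δ • 1)) :
    ∀ n : ℕ, L ^ n * M = M * (L + δ • 1) ^ n := by
  intro n
  induction n with
  | zero => rw [pow_zero, pow_zero, one_mul, mul_one]
  | succ n ih =>
    rw [pow_succ, pow_succ, mul_assoc, hM, ← mul_assoc, ih, mul_assoc]

lemma poch_shift {M : Module.End ℂ (LaurentSeries ℂ)} {δ : ℂ}
    (hM : L * M = M * (L + δ • 1)) (e : ℂ) :
    ∀ n : ℕ, pochEnd (L + e • 1) n * M = M * pochEnd (L + (e + δ) • 1) n := by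
  intro n
  induction n with
  | zero => rw [pochEnd_zero, pochEnd_zero, one_mul, mul_one]
  | succ n ih =>
    rw [pochEnd_succ, pochEnd_succ, smul_merge, smul_merge, mul_assoc,
      shift_comm hM (e + n), ← mul_assoc, ih, mul_assoc]
    congr 2
    rw [show e + ↑n + δ = e + δ + ↑n by ring]

lemma comm_pow {g : LaurentSeries ℂ} {d : ℂ}
    (hg : L * mz g = mz g * (L + d • 1)) :
    ∀ n : ℕ, L * mz (g ^ n) = mz (g ^ n) * (L + ((n : ℂ) * d) • 1) := by
  intro n
  induction n with
  | zero => rw [pow_zero, mz_one, one_mul, mul_one]; simp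
  | succ n ih =>
    rw [pow_succ, mz_mul, ← mul_assoc, ih, mul_assoc,
      show L + ((n : ℂ) * d) • 1 = L + ((n : ℂ) * d) • 1 from rfl]
    have : (L + ((n : ℂ) * d) • 1) * mz g = mz g * (L + ((n : ℂ) * d + d) • 1) := by
      have := shift_comm (M := mz g) (δ := d) hg ((n : ℂ) * d)
      exact this
    rw [this, ← mul_assoc]
    congr 2
    push_cast
    ring

variable (hder : Dz h ≠ 0) (hL : L = mz (-(h / Dz h)) * Dz + mz b)

include hder hL

lemma hne : h ≠ 0 := fun h0 => hder (by rw [h0, map_zero])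

lemma comm_h : L * mz h = mz h * (L + (-1 : ℂ) • 1) := by
  refine LinearMap.ext fun f => ?_
  simp only [hL, Module.End.mul_apply, LinearMap.add_apply, LinearMap.smul_apply,
    Module.End.one_apply, mz_apply, Dz_mul]
  have key : h / Dz h * Dz h = h := div_mul_cancel₀ h hder
  have key2 : -(h / Dz h) * Dz h * f = -(h * f) := by
    rw [show -(h / Dz h) * Dz h = -(h / Dz h * Dz h) by ring, key]; exact neg_mul h f
  rw [mul_add, ← mul_assoc, key2, neg_one_smul]
  ring

lemma comm_hinv : L * mz h⁻¹ = mz h⁻¹ * (L + (1 : ℂ) • 1) := by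
  have h1 : mz h⁻¹ * mz h = 1 := by
    rw [← mz_mul, inv_mul_cancel₀ (hne hder hL), mz_one]
  have h2 : mz h * mz h⁻¹ = 1 := by
    rw [← mz_mul, mul_inv_cancel₀ (hne hder hL), mz_one]
  have e : L * mz h = mz h * L - mz h := by
    rw [comm_h hder hL, mul_add, mul_smul_comm, mul_one]
    module
  have e2 : mz h * L = L * mz h + mz h := by rw [e]; abel
  calc L * mz h⁻¹ = mz h⁻¹ * (mz h * L * mz h⁻¹) := by
        rw [← mul_assoc, ← mul_assoc, h1, one_mul]
    _ = mz h⁻¹ * ((L * mz h + mz h) * mz h⁻¹) := by rw [e2]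
    _ = mz h⁻¹ * (L + (1 : ℂ) • 1) := by
        rw [add_mul, mul_assoc, h2, mul_one, one_smul]

lemma pow_A (α : ℕ) :
    (mz h * (L + c • 1)) ^ α = mz (h ^ α) * pochEnd (L + (c - (α : ℂ) + 1) • 1) α := by
  induction α with
  | zero => simp [pochEnd_zero, mz_one]
  | succ α ih =>
    have hcp := comm_pow (L := L) (comm_h hder hL) α
    have hs := shift_comm hcp c
    rw [show c + (α : ℂ) * (-1) = c - (α : ℂ) by ring] at hs
    calc (mz h * (L + c • 1)) ^ (α + 1)
        = mz h * ((L + c • 1) * (mz (h ^ α) * pochEnd (L + (c - (α : ℂ) + 1) • 1) α)) := by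
          rw [pow_succ', ih, mul_assoc]
      _ = mz h * (mz (h ^ α) *
            ((L + (c - (α : ℂ)) • 1) * pochEnd (L + (c - (α : ℂ) + 1) • 1) α)) := by
          rw [← mul_assoc (L + c • 1), hs, mul_assoc]
      _ = mz (h ^ (α + 1)) *
            ((L + (c - (α : ℂ)) • 1) * pochEnd (L + (c - (α : ℂ)) • 1 + (1 : ℂ) • 1) α) := by
          rw [← mul_assoc, ← mz_mul, ← pow_succ', smul_merge]
      _ = mz (h ^ (α + 1)) * pochEnd (L + (c - (α : ℂ)) • 1) (α + 1) := by
          rw [← pochEnd_succ_head]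
      _ = mz (h ^ (α + 1)) * pochEnd (L + (c - ((α : ℕ) + 1 : ℂ) + 1) • 1) (α + 1) := by
          rw [show c - ((α : ℕ) + 1 : ℂ) + 1 = c - (α : ℂ) by push_cast; ring]
      _ = mz (h ^ (α + 1)) * pochEnd (L + (c - ((α + 1 : ℕ) : ℂ) + 1) • 1) (α + 1) := by
          norm_cast

lemma pow_C (γ : ℕ) :
    (mz h⁻¹ * (L - c • 1)) ^ γ = mz (h⁻¹ ^ γ) * pochEnd (L - c • 1) γ := by
  have hsub : L - c • 1 = L + (-c) • 1 := by module
  rw [hsub]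
  induction γ with
  | zero => simp [pochEnd_zero, mz_one]
  | succ γ ih =>
    have hcp := comm_pow (L := L) (comm_hinv hder hL) γ
    have hs := shift_comm hcp (-c)
    rw [show (γ : ℂ) * 1 = (γ : ℂ) by ring] at hs
    have swap : (L + (-c + (γ : ℂ)) • 1) * pochEnd (L + (-c) • 1) γ
        = pochEnd (L + (-c) • 1) γ * (L + (-c) • 1 + (γ : ℂ) • 1) := by
      rw [← smul_merge L (-c) (γ : ℂ)]
      exact (poch_comm (L + (-c) • 1) γ (γ : ℂ)).symm
    calc (mz h⁻¹ * (L + (-c) • 1)) ^ (γ + 1)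
        = mz h⁻¹ * ((L + (-c) • 1) * (mz (h⁻¹ ^ γ) * pochEnd (L + (-c) • 1) γ)) := by
          rw [pow_succ', ih, mul_assoc]
      _ = mz h⁻¹ * (mz (h⁻¹ ^ γ) *
            ((L + (-c + (γ : ℂ)) • 1) * pochEnd (L + (-c) • 1) γ)) := by
          rw [← mul_assoc (L + (-c) • 1), hs, mul_assoc]
      _ = mz (h⁻¹ ^ (γ + 1)) *
            (pochEnd (L + (-c) • 1) γ * (L + (-c) • 1 + (γ : ℂ) • 1)) := by
          rw [← mul_assoc, ← mz_mul, ← pow_succ', swap]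
      _ = mz (h⁻¹ ^ (γ + 1)) * pochEnd (L + (-c) • 1) (γ + 1) := by
          rw [← pochEnd_succ]

end Main

/-- Let `ρ(L i) = h^i ∘ (L + i c)` for `i = −1, 0, 1`, where `L = ρ(L₀) = −(h/h′)∂ + b`.  Then
`ρ(L₁)^α ρ(L₀)^β ρ(L₋₁)^γ = h^{α−γ} · P(L + c − α + γ + 1, α) · (L + γ)^β · P(L − c, γ)` for all
nonnegative integers `α, β, γ`, where `P` is the Pochhammer symbol. -/
theorem enveloping_algebra_pbw_image
    (h b : LaurentSeries ℂ) (c : ℂ) (hder : Dz h ≠ 0)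
    (L : Module.End ℂ (LaurentSeries ℂ))
    (hL : L = mz (-(h / Dz h)) * Dz + mz b) :
    ∀ α β γ : ℕ,
      (mz h * (L + c • 1)) ^ α * L ^ β * (mz h⁻¹ * (L - c • 1)) ^ γ =
        mz (h ^ ((α : ℤ) - (γ : ℤ))) *
          pochEnd (L + (c - (α : ℂ) + (γ : ℂ) + 1) • 1) α *
          (L + (γ : ℂ) • 1) ^ β *
          pochEnd (L - c • 1) γ := by
  intro α β γ
  have hzpow : h ^ ((α : ℤ) - (γ : ℤ)) = h ^ α * h⁻¹ ^ γ := by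
    rw [zpow_sub₀ (hne hder hL), zpow_natCast, zpow_natCast, div_eq_mul_inv, inv_pow]
  have hcp := comm_pow (L := L) (comm_hinv hder hL) γ
  rw [show (γ : ℂ) * 1 = (γ : ℂ) by ring] at hcp
  have e1 : ∀ X, L ^ β * (mz (h⁻¹ ^ γ) * X)
      = mz (h⁻¹ ^ γ) * ((L + (γ : ℂ) • 1) ^ β * X) := fun X => by
    rw [← mul_assoc, pow_shift hcp β, mul_assoc]
  have e2 : ∀ X, pochEnd (L + (c - (α : ℂ) + 1) • 1) α * (mz (h⁻¹ ^ γ) * X)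
      = mz (h⁻¹ ^ γ) * (pochEnd (L + (c - (α : ℂ) + 1 + (γ : ℂ)) • 1) α * X) := fun X => by
    rw [← mul_assoc, poch_shift hcp (c - (α : ℂ) + 1) α, mul_assoc]
  rw [pow_A hder hL α, pow_C hder hL γ]
  simp only [mul_assoc]
  rw [e1, e2, ← mul_assoc (mz (h ^ α)), ← mz_mul, ← hzpow,
    show c - (α : ℂ) + 1 + (γ : ℂ) = c - (α : ℂ) + (γ : ℂ) + 1 by ring]
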